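/- (Lemma 3.3 of the paper, rigidity part.) Let W and V be finite-dimensional real inner product spaces with dim W = dim V = n, and let l : W → V be a linear map that is area-nonincreasing: ‖l(w_1)‖²‖l(w_2)‖² − ⟨l(w_1), l(w_2)⟩² ≤ ‖w_1‖²‖w_2‖² − ⟨w_1, w_2⟩² for all w_1, w_2 ∈ W. Let R : V × V × V × V → ℝ be an algebraic curvature tensor (multilinear, with R(x,y,z,w) = −R(y,x,z,w) = −R(x,y,w,z), R(x,y,z,w) = R(z,w,x,y), and R(x,y,z,w) + R(y,z,x,w) + R(z,x,y,w) = 0) such that R(x,y,y,x) ≥ 0 for all x, y ∈ V. Assume there is an orthonormal basis {v_1, …, v_n} of V such that for every unit vector x ∈ V: 0 < Σ_i R(v_i, x, x, v_i) < Σ_{i<j} R(v_i, v_j, v_j, v_i) (i.e., (scal/2)·g ≻ Ric ≻ 0). If there exist an orthonormal basis {w_1, …, w_n} of W and an orthonormal basis {v'_1, …, v'_n} of V with Σ_{i<j} R(l(w_i), l(w_j), l(w_j), l(w_i)) = Σ_{i<j} R(v'_i, v'_j, v'_j, v'_i), then l is a linear isometry, i.e., ‖l(w)‖ = ‖w‖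 for all w ∈ W. -/

import Mathlib

open Finset
open scoped RealInnerProductSpace

lemma bilin_trace_indep {V : Type*} [NormedAddCommGroup V] [InnerProductSpace ℝ V]
    {n : ℕ} (b c : OrthonormalBasis (Fin n) ℝ V) (B : V →ₗ[ℝ] V →ₗ[ℝ] ℝ) :
    ∑ i, B (b i) (b i) = ∑ i, B (c i) (c i) := by
  have hrep : ∀ i, b i = ∑ k, ⟪c k, b i⟫ • c k := fun i => (c.sum_repr' (b i)).symm
  calc ∑ i, B (b i) (b i)
      = ∑ i, ∑ k, ∑ m, (⟪c k, b i⟫ * ⟪c m, b i⟫) * B (c k) (c m) := by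
        refine Finset.sum_congr rfl fun i _ => ?_
        conv_lhs => rw [hrep i]
        simp only [map_sum, LinearMap.sum_apply, map_smul, LinearMap.smul_apply, smul_eq_mul,
          Finset.mul_sum]
        rw [Finset.sum_comm]
        exact Finset.sum_congr rfl fun k _ => Finset.sum_congr rfl fun m _ => by ring
    _ = ∑ k, ∑ m, (∑ i, ⟪c k, b i⟫ * ⟪c m, b i⟫) * B (c k) (c m) := by
        rw [Finset.sum_comm]
        refine Finset.sum_congr rfl fun k _ => ?_
        rw [Finset.sum_comm]
        refine Finset.sum_congr rfl fun m _ => ?_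
        rw [Finset.sum_mul]
    _ = ∑ k, ∑ m, (if k = m then (1:ℝ) else 0) * B (c k) (c m) := by
        refine Finset.sum_congr rfl fun k _ => Finset.sum_congr rfl fun m _ => ?_
        congr 1
        have : ∀ i, ⟪c m, b i⟫ = ⟪b i, c m⟫ := fun i => real_inner_comm _ _
        simp_rw [this]
        rw [b.sum_inner_mul_inner]
        exact orthonormal_iff_ite.mp c.orthonormal k m
    _ = ∑ k, B (c k) (c k) := by
        simp [ite_mul]

lemma ric_indep {V : Type*} [NormedAddCommGroup V] [InnerProductSpace ℝ V]
    {n : ℕ} (b c : OrthonormalBasis (Fin n) ℝ V)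
    (R : V →ₗ[ℝ] V →ₗ[ℝ] V →ₗ[ℝ] V →ₗ[ℝ] ℝ) (x : V) :
    ∑ i, R (b i) x x (b i) = ∑ i, R (c i) x x (c i) := by
  exact bilin_trace_indep b c
    (LinearMap.mk₂ ℝ (fun u v => R u x x v)
      (by intro u u' v; simp) (by intro a u v; simp)
      (by intro u v v'; simp) (by intro a u v; simp))

lemma quad_indep {W V : Type*} [NormedAddCommGroup W] [InnerProductSpace ℝ W]
    [NormedAddCommGroup V] [InnerProductSpace ℝ V]
    {n : ℕ} (b c : OrthonormalBasis (Fin n) ℝ W) (L : W →ₗ[ℝ] V)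
    (R : V →ₗ[ℝ] V →ₗ[ℝ] V →ₗ[ℝ] V →ₗ[ℝ] ℝ) :
    ∑ i, ∑ j, R (L (b i)) (L (b j)) (L (b j)) (L (b i)) =
      ∑ i, ∑ j, R (L (c i)) (L (c j)) (L (c j)) (L (c i)) := by
  have step1 : ∀ y : V, ∑ i, R (L (b i)) y y (L (b i)) = ∑ i, R (L (c i)) y y (L (c i)) := by
    intro y
    exact bilin_trace_indep b c
      (LinearMap.mk₂ ℝ (fun u v => R (L u) y y (L v))
        (by intro u u' v; simp) (by intro a u v; simp)
        (by intro u v v'; simp) (by intro a u v; simp))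
  have step2 : ∀ z : V, ∑ j, R z (L (b j)) (L (b j)) z = ∑ j, R z (L (c j)) (L (c j)) z := by
    intro z
    exact bilin_trace_indep b c
      (LinearMap.mk₂ ℝ (fun u v => R z (L u) (L v) z)
        (by intro u u' v; simp) (by intro a u v; simp)
        (by intro u v v'; simp) (by intro a u v; simp))
  calc ∑ i, ∑ j, R (L (b i)) (L (b j)) (L (b j)) (L (b i))
      = ∑ j, ∑ i, R (L (b i)) (L (b j)) (L (b j)) (L (b i)) := Finset.sum_comm
    _ = ∑ j, ∑ i, R (L (c i)) (L (b j)) (L (b j)) (L (c i)) :=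
        Finset.sum_congr rfl fun j _ => step1 (L (b j))
    _ = ∑ i, ∑ j, R (L (c i)) (L (b j)) (L (b j)) (L (c i)) := Finset.sum_comm
    _ = ∑ i, ∑ j, R (L (c i)) (L (c j)) (L (c j)) (L (c i)) :=
        Finset.sum_congr rfl fun i _ => step2 (L (c i))

lemma double_ioi {n : ℕ} (F : Fin n → Fin n → ℝ)
    (hsymm : ∀ i j, F i j = F j i) (hdiag : ∀ i, F i i = 0) :
    ∑ i, ∑ j, F i j = 2 * ∑ i, ∑ j ∈ Ioi i, F i j := by
  have hIoi : ∀ i : Fin n, (Ioi i) = Finset.univ.filter (fun j => i < j) := by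
    intro i; ext j; simp
  have hsplit : ∀ i j : Fin n,
      F i j = (if i < j then F i j else 0) + (if j < i then F i j else 0)
        + (if i = j then F i j else 0) := by
    intro i j
    rcases lt_trichotomy i j with h | h | h
    · simp [h, not_lt_of_gt h, ne_of_lt h]
    · simp [h, lt_irrefl]
    · simp [h, not_lt_of_gt h, (ne_of_lt h).symm, ne_of_gt h]
  calc ∑ i, ∑ j, F i j
      = (∑ i, ∑ j, if i < j then F i j else 0) + (∑ i, ∑ j, if j < i then F i j else 0)
        + (∑ i, ∑ j, if i = j then F i j else 0) := by
        simp_rw [← Finset.sum_add_distrib]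
        exact Finset.sum_congr rfl fun i _ => Finset.sum_congr rfl fun j _ => hsplit i j
    _ = (∑ i, ∑ j ∈ Ioi i, F i j) + (∑ i, ∑ j ∈ Ioi i, F i j) + 0 := by
        congr 1
        congr 1
        · exact Finset.sum_congr rfl fun i _ => by rw [hIoi i, Finset.sum_filter]
        · rw [Finset.sum_comm]
          refine Finset.sum_congr rfl fun i _ => ?_
          rw [hIoi i, Finset.sum_filter]
          exact Finset.sum_congr rfl fun j _ => by rcases eq_or_ne i j with h|h <;> simp [hsymm i j]
        · simp [Finset.sum_ite_eq, hdiag]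
    _ = 2 * ∑ i, ∑ j ∈ Ioi i, F i j := by ring

set_option maxHeartbeats 1000000 in
/-- **Lemma 3.3 of the paper, rigidity part.**
Let `l : W → V` be an area-nonincreasing linear map between `n`-dimensional real inner
product spaces, and let `R` be an algebraic curvature tensor on `V` with `sec ≥ 0`
satisfying `(scal/2)·g ≻ Ric ≻ 0` (expressed via an orthonormal basis `v`).  If
equality `tr(L* ∘ R ∘ L) = scal/2` holds (for some orthonormal bases `w` of `W` and
`v'` of `V`), then `l` is a linear isometry. -/
theorem trace_equality_rigidity
    {W V : Type*} [NormedAddCommGroup W] [InnerProductSpace ℝ W]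
    [NormedAddCommGroup V] [InnerProductSpace ℝ V]
    [FiniteDimensional ℝ W] [FiniteDimensional ℝ V]
    {n : ℕ}
    (hW : Module.finrank ℝ W = n) (hV : Module.finrank ℝ V = n)
    (l : W →ₗ[ℝ] V)
    (hl : ∀ w₁ w₂ : W,
      ‖l w₁‖ ^ 2 * ‖l w₂‖ ^ 2 - ⟪l w₁, l w₂⟫ ^ 2 ≤
        ‖w₁‖ ^ 2 * ‖w₂‖ ^ 2 - ⟪w₁, w₂⟫ ^ 2)
    (R : V →ₗ[ℝ] V →ₗ[ℝ] V →ₗ[ℝ] V →ₗ[ℝ] ℝ)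
    (hR1 : ∀ x y z w : V, R x y z w = -R y x z w)
    (hR2 : ∀ x y z w : V, R x y z w = -R x y w z)
    (hR3 : ∀ x y z w : V, R x y z w = R z w x y)
    (hRb : ∀ x y z w : V, R x y z w + R y z x w + R z x y w = 0)
    (hsec : ∀ x y : V, 0 ≤ R x y y x)
    (hpinch : ∃ v : OrthonormalBasis (Fin n) ℝ V, ∀ x : V, ‖x‖ = 1 →
      0 < ∑ i, R (v i) x x (v i) ∧
        ∑ i, R (v i) x x (v i) < ∑ i, ∑ j ∈ Ioi i, R (v i) (v j) (v j) (v i))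
    (heq : ∃ (w : OrthonormalBasis (Fin n) ℝ W) (v' : OrthonormalBasis (Fin n) ℝ V),
      ∑ i, ∑ j ∈ Ioi i, R (l (w i)) (l (w j)) (l (w j)) (l (w i)) =
        ∑ i, ∑ j ∈ Ioi i, R (v' i) (v' j) (v' j) (v' i)) :
    ∀ w : W, ‖l w‖ = ‖w‖ := by
  obtain ⟨v, hv⟩ := hpinch
  obtain ⟨w, v', hwv⟩ := heq
  -- trivial case n = 0
  by_cases h0 : n = 0
  · subst h0
    haveI : Subsingleton W := Module.finrank_zero_iff.mp hW
    intro x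
    rw [Subsingleton.elim x 0, map_zero, norm_zero, norm_zero]
  -- absurd case n = 1
  by_cases h1 : n = 1
  · subst h1
    exfalso
    obtain ⟨ha, hb⟩ := hv (v 0) (v.orthonormal.1 0)
    have hz : ∑ i : Fin 1, ∑ j ∈ Ioi i, R (v i) (v j) (v j) (v i) = 0 := by
      simp [Fin.sum_univ_one]
    rw [hz] at hb
    linarith
  have hn2 : 2 ≤ n := by omega
  -- diagonalize adjoint l ∘ l
  have hT : ((LinearMap.adjoint l) ∘ₗ l).IsSymmetric := by
    intro u u'
    simp only [LinearMap.comp_apply]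
    rw [LinearMap.adjoint_inner_left, LinearMap.adjoint_inner_right]
  set e := hT.eigenvectorBasis hW with he
  have horth : ∀ i j, i ≠ j → ⟪l (e i), l (e j)⟫ = 0 := by
    intro i j hij
    have h1 : ⟪l (e i), l (e j)⟫ = ⟪((LinearMap.adjoint l) ∘ₗ l) (e i), e j⟫ := by
      simp only [LinearMap.comp_apply]
      rw [LinearMap.adjoint_inner_left]
    rw [h1, hT.apply_eigenvectorBasis, real_inner_smul_left, e.orthonormal.2 hij, mul_zero]
  -- singular value data
  set lam : Fin n → ℝ := fun i => ‖l (e i)‖ with hlamdef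
  have hlam0 : ∀ i, 0 ≤ lam i := fun i => norm_nonneg _
  have hcard : Module.finrank ℝ V = Fintype.card (Fin n) := by simp [hV]
  have hgorth : Orthonormal ℝ
      (Set.restrict {i | l (e i) ≠ 0} (fun i => ‖l (e i)‖⁻¹ • l (e i))) := by
    constructor
    · rintro ⟨i, hi⟩
      show ‖‖l (e i)‖⁻¹ • l (e i)‖ = 1
      simp only [norm_smul, norm_inv, norm_norm]
      exact inv_mul_cancel₀ (norm_ne_zero_iff.mpr hi)
    · rintro ⟨i, hi⟩ ⟨j, hj⟩ hij
      have hij' : i ≠ j := fun h => hij (Subtype.ext h)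
      show ⟪‖l (e i)‖⁻¹ • l (e i), ‖l (e j)‖⁻¹ • l (e j)⟫ = 0
      simp only [real_inner_smul_left, real_inner_smul_right,
        horth i j hij', mul_zero]
  obtain ⟨f, hf⟩ := hgorth.exists_orthonormalBasis_extension_of_card_eq hcard
  have key : ∀ i, l (e i) = lam i • f i := by
    intro i
    by_cases h : l (e i) = 0
    · simp [hlamdef, h]
    · rw [hf i h, hlamdef, smul_smul, mul_inv_cancel₀ (norm_ne_zero_iff.mpr h), one_smul]
  -- area-nonincreasing on the SVD basis
  have hll : ∀ i j, i ≠ j → (lam i * lam j) ^ 2 ≤ 1 := by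
    intro i j hij
    have h := hl (e i) (e j)
    rw [horth i j hij, e.orthonormal.2 hij, e.orthonormal.1 i, e.orthonormal.1 j] at h
    have : (lam i * lam j) ^ 2 = ‖l (e i)‖ ^ 2 * ‖l (e j)‖ ^ 2 := by
      rw [hlamdef]; ring
    rw [this]
    norm_num at h
    nlinarith [h]
  -- curvature coefficients
  set Rf : Fin n → Fin n → ℝ := fun i j => R (f i) (f j) (f j) (f i) with hRfdef
  have hRfnn : ∀ i j, 0 ≤ Rf i j := fun i j => hsec _ _
  have hRfsymm : ∀ i j, Rf i j = Rf j i := fun i j => hR3 _ _ _ _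
  have hdiag0 : ∀ x : V, R x x x x = 0 := fun x => by have := hR1 x x x x; linarith
  have hRfdiag : ∀ i, Rf i i = 0 := fun i => hdiag0 (f i)
  set S : ℝ := ∑ i, ∑ j ∈ Ioi i, Rf i j with hSdef
  -- pinching transferred to the basis f
  have hSv : ∑ i, ∑ j ∈ Ioi i, R (v i) (v j) (v j) (v i) = S := by
    have h2 := double_ioi (fun i j => R (v i) (v j) (v j) (v i))
      (fun i j => hR3 _ _ _ _) (fun i => hdiag0 (v i))
    have h3 := double_ioi Rf hRfsymm hRfdiag
    have h4 := quad_indep v f (LinearMap.id (R := ℝ) (M := V)) R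
    simp only [LinearMap.id_coe, id_eq] at h4
    rw [h4] at h2
    rw [h3] at h2
    linarith
  have hric : ∀ x : V, ‖x‖ = 1 →
      0 < ∑ i, R (f i) x x (f i) ∧ ∑ i, R (f i) x x (f i) < S := by
    intro x hx
    obtain ⟨ha, hb⟩ := hv x hx
    have h1 : ∑ i, R (v i) x x (v i) = ∑ i, R (f i) x x (f i) := ric_indep v f R x
    rw [h1] at ha hb
    rw [hSv] at hb
    exact ⟨ha, hb⟩
  -- the trace equality in the basis (e, f)
  have hmain : ∑ i, ∑ j ∈ Ioi i, (lam i * lam j) ^ 2 * Rf i j = S := by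
    have hfw := double_ioi (fun i j => R (l (w i)) (l (w j)) (l (w j)) (l (w i)))
      (fun i j => hR3 _ _ _ _) (fun i => hdiag0 _)
    have hfe := double_ioi (fun i j => R (l (e i)) (l (e j)) (l (e j)) (l (e i)))
      (fun i j => hR3 _ _ _ _) (fun i => hdiag0 _)
    have hfv' := double_ioi (fun i j => R (v' i) (v' j) (v' j) (v' i))
      (fun i j => hR3 _ _ _ _) (fun i => hdiag0 _)
    have hq := quad_indep w e l R
    have hq2 := quad_indep v' f (LinearMap.id (R := ℝ) (M := V)) R
    simp only [LinearMap.id_coe, id_eq] at hq2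
    have h3 := double_ioi Rf hRfsymm hRfdiag
    have hterm : ∀ i j, R (l (e i)) (l (e j)) (l (e j)) (l (e i))
        = (lam i * lam j) ^ 2 * Rf i j := by
      intro i j
      rw [key i, key j]
      simp only [map_smul, LinearMap.smul_apply, smul_eq_mul, hRfdef]
      ring
    have he2 : ∑ i, ∑ j ∈ Ioi i, R (l (e i)) (l (e j)) (l (e j)) (l (e i))
        = ∑ i, ∑ j ∈ Ioi i, (lam i * lam j) ^ 2 * Rf i j :=
      Finset.sum_congr rfl fun i _ => Finset.sum_congr rfl fun j _ => hterm i j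
    -- chain: Ioi over w = Ioi over e ; Ioi over v' = Ioi over f = S
    rw [hq] at hfw
    rw [hq2] at hfv'
    rw [hfe] at hfw
    rw [h3] at hfv'
    rw [he2] at hfw
    -- hwv : Ioi over w = Ioi over v'
    linarith [hwv, hfw, hfv']
  -- termwise equality
  have hpair' : ∀ i ∈ (univ : Finset (Fin n)), ∀ j ∈ Ioi i,
      (lam i * lam j) ^ 2 * Rf i j = Rf i j := by
    have hle : ∀ i ∈ (univ : Finset (Fin n)),
        ∑ j ∈ Ioi i, (lam i * lam j) ^ 2 * Rf i j ≤ ∑ j ∈ Ioi i, Rf i j := by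
      intro i _
      refine Finset.sum_le_sum fun j hj => ?_
      have hij : i ≠ j := ne_of_lt (Finset.mem_Ioi.mp hj)
      nlinarith [hll i j hij, hRfnn i j]
    have houter := (Finset.sum_eq_sum_iff_of_le hle).mp (by rw [hmain, hSdef])
    intro i hi
    have hlei : ∀ j ∈ Ioi i, (lam i * lam j) ^ 2 * Rf i j ≤ Rf i j := by
      intro j hj
      have hij : i ≠ j := ne_of_lt (Finset.mem_Ioi.mp hj)
      nlinarith [hll i j hij, hRfnn i j]
    exact (Finset.sum_eq_sum_iff_of_le hlei).mp (houter i hi)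
  have hpair : ∀ i j, i ≠ j → (lam i * lam j) ^ 2 * Rf i j = Rf i j := by
    intro i j hij
    rcases lt_or_gt_of_ne hij with h | h
    · exact hpair' i (mem_univ i) j (Finset.mem_Ioi.mpr h)
    · have := hpair' j (mem_univ j) i (Finset.mem_Ioi.mpr h)
      rw [hRfsymm i j]
      linear_combination this
  -- all singular values are ≥ 1
  have hge1 : ∀ k, 1 ≤ lam k := by
    intro k
    by_contra hk
    push_neg at hk
    obtain ⟨hpos, _⟩ := hric (f k) (f.orthonormal.1 k)
    -- find j₀ with positive curvature with k
    have hex : ∃ j₀, 0 < Rf j₀ k := by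
      by_contra hno
      push_neg at hno
      have : ∑ i, R (f i) (f k) (f k) (f i) ≤ 0 :=
        Finset.sum_nonpos fun i _ => hno i
      linarith
    obtain ⟨j₀, hj₀pos⟩ := hex
    have hj₀k : j₀ ≠ k := by
      intro h; rw [h, hRfdiag k] at hj₀pos; exact lt_irrefl _ hj₀pos
    -- lam j₀ * lam k = 1
    have hs : (lam j₀ * lam k) ^ 2 = 1 := by
      have h := hpair j₀ k hj₀k
      have h2 : (lam j₀ * lam k) ^ 2 * Rf j₀ k = 1 * Rf j₀ k := by linarith
      exact mul_right_cancel₀ (ne_of_gt hj₀pos) h2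
    have hprod : lam j₀ * lam k = 1 := by
      have h4 : (lam j₀ * lam k - 1) * (lam j₀ * lam k + 1) = 0 := by linear_combination hs
      rcases mul_eq_zero.mp h4 with h | h
      · linarith
      · nlinarith [mul_nonneg (hlam0 j₀) (hlam0 k)]
    have hk0 : 0 < lam k := by
      rcases (hlam0 k).lt_or_eq with h | h
      · exact h
      · exfalso; rw [← h, mul_zero] at hprod; norm_num at hprod
    have hj₀big : 1 < lam j₀ := by nlinarith [hprod, hk, hk0]
    have hsmall : ∀ m, m ≠ j₀ → lam m ≤ lam k := by
      intro m hm
      have ht : lam j₀ * lam m ≤ 1 := by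
        nlinarith [hll j₀ m (fun h => hm h.symm), mul_nonneg (hlam0 j₀) (hlam0 m)]
      nlinarith [ht, hprod, hj₀big, hlam0 m]
    have hzero : ∀ p q, p ≠ j₀ → q ≠ j₀ → Rf p q = 0 := by
      intro p q hp hq
      rcases eq_or_ne p q with h | h
      · rw [h]; exact hRfdiag q
      · have hpq : lam p * lam q ≤ lam k * lam k :=
          mul_le_mul (hsmall p hp) (hsmall q hq) (hlam0 q) (hlam0 k)
        have hkk : lam k * lam k < 1 := by nlinarith [hk, hk0]
        have hlt1 : lam p * lam q < 1 := lt_of_le_of_lt hpq hkk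
        have hs1 : (lam p * lam q) ^ 2 < 1 := by
          nlinarith [hlt1, mul_nonneg (hlam0 p) (hlam0 q)]
        have h2 : (1 - (lam p * lam q) ^ 2) * Rf p q = 0 := by
          have := hpair p q h; linarith [this]
        rcases mul_eq_zero.mp h2 with h3 | h3
        · linarith
        · exact h3
    -- scal/2 = Ric(f j₀) < scal/2
    have hrow : ∀ i, i ≠ j₀ → ∑ j, Rf i j = Rf i j₀ := by
      intro i hi
      exact Finset.sum_eq_single j₀ (fun j _ hj => hzero i j hi hj) (by simp)
    have h2S : ∑ i, ∑ j, Rf i j = 2 * S := by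
      rw [hSdef]; exact double_ioi Rf hRfsymm hRfdiag
    have hRicj : ∑ i, ∑ j, Rf i j = 2 * ∑ i, Rf i j₀ := by
      rw [← Finset.add_sum_erase _ _ (mem_univ j₀)]
      have h5 : ∑ i ∈ univ.erase j₀, ∑ j, Rf i j = ∑ i ∈ univ.erase j₀, Rf i j₀ :=
        Finset.sum_congr rfl fun i hi => hrow i (Finset.ne_of_mem_erase hi)
      rw [h5, Finset.sum_erase_eq_sub (mem_univ j₀), hRfdiag j₀]
      have h6 : ∑ j, Rf j₀ j = ∑ j, Rf j j₀ :=
        Finset.sum_congr rfl fun j _ => hRfsymm j₀ j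
      rw [h6]
      ring
    obtain ⟨_, hlt⟩ := hric (f j₀) (f.orthonormal.1 j₀)
    have h7 : ∑ i, R (f i) (f j₀) (f j₀) (f i) = ∑ i, Rf i j₀ :=
      Finset.sum_congr rfl fun i _ => rfl
    rw [h7] at hlt
    linarith [h2S, hRicj, hlt]
  -- all singular values are equal to 1
  have hone : ∀ k, lam k = 1 := by
    intro k
    obtain ⟨j, hj⟩ := Fintype.exists_ne_of_one_lt_card
      (by rw [Fintype.card_fin]; omega) k
    have h := hll k j (fun h => hj h.symm)
    have hk1 := hge1 k
    have hj1 := hge1 j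
    have ht1 : 1 ≤ lam k * lam j := by nlinarith [mul_nonneg (by linarith : (0:ℝ) ≤ lam k - 1) (by linarith : (0:ℝ) ≤ lam j - 1)]
    have ht2 : lam k * lam j ≤ 1 := by nlinarith [h, ht1]
    have hle1 : lam k ≤ 1 := by nlinarith [ht2, hj1, hlam0 k]
    exact le_antisymm hle1 hk1
  have hlef : ∀ i, l (e i) = f i := by
    intro i
    rw [key i, hone i, one_smul]
  -- conclude
  intro x
  have hla : l x = ∑ i, ⟪e i, x⟫ • f i := by
    conv_lhs => rw [← e.sum_repr' x]
    rw [map_sum]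
    exact Finset.sum_congr rfl fun i _ => by rw [map_smul, hlef i]
  have horthf := orthonormal_iff_ite.mp f.orthonormal
  have horthe := orthonormal_iff_ite.mp e.orthonormal
  have h1 : ⟪l x, l x⟫ = ∑ i, ⟪e i, x⟫ * ⟪e i, x⟫ := by
    rw [hla, sum_inner]
    refine Finset.sum_congr rfl fun i _ => ?_
    rw [inner_sum]
    simp [real_inner_smul_left, real_inner_smul_right, horthf, mul_ite]
  have h2 : ⟪x, x⟫ = ∑ i, ⟪e i, x⟫ * ⟪e i, x⟫ := by
    conv_lhs => rw [← e.sum_repr' x]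
    rw [sum_inner]
    refine Finset.sum_congr rfl fun i _ => ?_
    rw [inner_sum]
    simp [real_inner_smul_left, real_inner_smul_right, horthe, mul_ite]
  have h3 : ‖l x‖ ^ 2 = ‖x‖ ^ 2 := by
    rw [← real_inner_self_eq_norm_sq, ← real_inner_self_eq_norm_sq, h1, h2]
  have h4 := norm_nonneg (l x)
  have h5 := norm_nonneg x
  nlinarith [h3, h4, h5]
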